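/- Let m ≥ 1 and k ≥ 1 be integers, let x : Fin m → ℝ satisfy 0 ≤ x j for all j and ∑ j, x j ≤ k, and let v be the coverage function determined by a finite type Y and A : Fin m → Finset Y. Then the expected value of v under the k-draw lottery has the closed form G_k^v(x) = ∑_{ℓ ∈ Y} (1 − (1 − (∑_{j : ℓ ∈ A j} x j)/k)^k). -/

import Mathlib

open Finset

/-- Per-draw weights: project `j` is drawn with probability `x j / k`, and
`none` (no project) with the remaining probability `1 - (∑ j, x j)/k`. -/
noncomputable def lotW {m : ℕ} (k : ℕ) (x : Fin m → ℝ) : Option (Fin m) → ℝ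
  | some j => x j / k
  | none => 1 - (∑ j, x j) / k

/-- Probability of a particular draw function `f : Fin t → Option (Fin m)`,
with per-draw weights determined by `k` and `x`. -/
noncomputable def lotP {m : ℕ} (k t : ℕ) (x : Fin m → ℝ)
    (f : Fin t → Option (Fin m)) : ℝ :=
  ∏ s, lotW k x (f s)

/-- The set of projects chosen by a draw function `f`. -/
def lotProj {m t : ℕ} (f : Fin t → Option (Fin m)) : Finset (Fin m) :=
  Finset.univ.filter (fun j => ∃ s, f s = some j)


/-- Expected value of the set function `v` under the `k`-bounded-lottery
rounding scheme `r_k` applied to `x`. -/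
noncomputable def lotG {m : ℕ} (k : ℕ) (v : Finset (Fin m) → ℝ)
    (x : Fin m → ℝ) : ℝ :=
  ∑ f : Fin k → Option (Fin m), lotP k k x f * v (lotProj f)

lemma sum_prod_fn {k : ℕ} {O : Type*} [Fintype O] [DecidableEq O] (g : O → ℝ) :
    ∑ f : Fin k → O, ∏ s, g (f s) = (∑ o, g o) ^ k := by
  have h : (∑ o, g o) ^ k = ∏ _s : Fin k, ∑ o, g o := by
    simp [Finset.prod_const]
  rw [h, Finset.prod_univ_sum]
  rw [← Fintype.piFinset_univ]

theorem stmt5 (m k : ℕ) (hm : 1 ≤ m) (hk : 1 ≤ k) (x : Fin m → ℝ)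
    (hx : ∀ j, 0 ≤ x j) (hsum : ∑ j, x j ≤ (k : ℝ))
    (Y : Type) [Fintype Y] [DecidableEq Y] (A : Fin m → Finset Y)
    (v : Finset (Fin m) → ℝ)
    (hv : ∀ S : Finset (Fin m), v S = ((S.biUnion A).card : ℝ)) :
    lotG k v x
      = ∑ ℓ : Y,
          (1 - (1 - (∑ j ∈ Finset.univ.filter (fun j => ℓ ∈ A j), x j) / k) ^ k) := by
  classical
  have hk0 : (k : ℝ) ≠ 0 := Nat.cast_ne_zero.mpr (by omega)
  -- weights sum to 1
  have hw1 : ∑ o : Option (Fin m), lotW k x o = 1 := by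
    rw [Fintype.sum_option]
    simp only [lotW]
    rw [← Finset.sum_div]
    ring
  -- for each ℓ define gℓ
  set q : Y → ℝ := fun ℓ => ∑ j ∈ Finset.univ.filter (fun j => ℓ ∈ A j), x j with hq
  have key : ∀ ℓ : Y,
      ∑ f : Fin k → Option (Fin m),
        lotP k k x f * (if ℓ ∈ (lotProj f).biUnion A then (1:ℝ) else 0)
      = 1 - (1 - q ℓ / k) ^ k := by
    intro ℓ
    set g : Option (Fin m) → ℝ := fun o =>
      match o with
      | none => lotW k x none
      | some j => if ℓ ∈ A j then 0 else lotW k x (some j) with hg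
    have hgsum : ∑ o : Option (Fin m), g o = 1 - q ℓ / k := by
      rw [Fintype.sum_option]
      simp only [hg, lotW]
      rw [Finset.sum_ite, Finset.sum_const_zero, zero_add, ← Finset.sum_div]
      have hsplit : (∑ j ∈ Finset.univ.filter (fun j => ℓ ∈ A j), x j)
          + (∑ j ∈ Finset.univ.filter (fun j => ¬ ℓ ∈ A j), x j) = ∑ j, x j := by
        rw [Finset.sum_filter_add_sum_filter_not]
      have : (∑ j ∈ Finset.univ.filter (fun j => ¬ ℓ ∈ A j), x j)
          = (∑ j, x j) - q ℓ := by rw [hq]; linarith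
      rw [this]
      field_simp
      ring
    have hprod : ∀ f : Fin k → Option (Fin m),
        ∏ s, g (f s)
          = lotP k k x f * (if ℓ ∈ (lotProj f).biUnion A then (0:ℝ) else 1) := by
      intro f
      by_cases hmem : ℓ ∈ (lotProj f).biUnion A
      · simp only [hmem, if_true, mul_zero]
        obtain ⟨j, hj, hℓ⟩ := Finset.mem_biUnion.mp hmem
        obtain ⟨s, hs⟩ := (Finset.mem_filter.mp hj).2
        apply Finset.prod_eq_zero (Finset.mem_univ s)
        simp [hg, hs, hℓ]
      · simp only [hmem, if_false, mul_one, lotP]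
        apply Finset.prod_congr rfl
        intro s _
        cases hfs : f s with
        | none => simp [hg]
        | some j =>
          have : ℓ ∉ A j := by
            intro hℓ
            exact hmem (Finset.mem_biUnion.mpr ⟨j,
              Finset.mem_filter.mpr ⟨Finset.mem_univ j, ⟨s, hfs⟩⟩, hℓ⟩)
          simp [hg, this]
    have h1 : ∑ f : Fin k → Option (Fin m), lotP k k x f = 1 := by
      have := sum_prod_fn (k := k) (lotW k x)
      rw [hw1, one_pow] at this
      simpa [lotP] using this
    have h2 : ∑ f : Fin k → Option (Fin m),
        lotP k k x f * (if ℓ ∈ (lotProj f).biUnion A then (0:ℝ) else 1)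
        = (1 - q ℓ / k) ^ k := by
      rw [← hgsum, ← sum_prod_fn g]
      exact Finset.sum_congr rfl fun f _ => (hprod f).symm
    have : ∀ f : Fin k → Option (Fin m),
        lotP k k x f * (if ℓ ∈ (lotProj f).biUnion A then (1:ℝ) else 0)
        = lotP k k x f
          - lotP k k x f * (if ℓ ∈ (lotProj f).biUnion A then (0:ℝ) else 1) := by
      intro f; by_cases h : ℓ ∈ (lotProj f).biUnion A <;> simp [h]
    rw [Finset.sum_congr rfl fun f _ => this f, Finset.sum_sub_distrib, h1, h2]
  -- main computation
  unfold lotG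
  have hcard : ∀ f : Fin k → Option (Fin m),
      v (lotProj f) = ∑ ℓ : Y, (if ℓ ∈ (lotProj f).biUnion A then (1:ℝ) else 0) := by
    intro f
    rw [hv]
    rw [Finset.sum_ite_mem, Finset.univ_inter, Finset.sum_const, nsmul_eq_mul, mul_one]
  rw [Finset.sum_congr rfl fun f _ => by rw [hcard f, Finset.mul_sum]]
  rw [Finset.sum_comm]
  exact Finset.sum_congr rfl fun ℓ _ => key ℓ
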